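/- Let $|\psi_1\rangle, \dots, |\psi_5\rangle$ be pairwise orthogonal nonzero decomposable 2-vectors in $\wedge^2 \mathbb{C}^4$ such that $|\psi_1\rangle = |a\rangle \wedge |b_1\rangle$ and $|\psi_2\rangle = |a\rangle \wedge |b_2\rangle$ for some vectors $|a\rangle, |b_1\rangle, |b_2\rangle \in \mathbb{C}^4$ (i.e., $|\psi_1\rangle$ and $|\psi_2\rangle$ share a common factor). Then the set $\{|\psi_1\rangle,\dots,|\psi_5\rangle\}$ is not a fermionic unextendible product basis; i.e., there exists a nonzero decomposable 2-vector orthogonal to all five. -/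

import Mathlib

open scoped InnerProductSpace

noncomputable section

/-- The `N`-fold tensor power of `ℂ^M`, realized as the Euclidean space with
orthonormal basis indexed by multi-indices `Fin N → Fin M`. -/
abbrev TensorPow (N M : ℕ) : Type := EuclideanSpace ℂ (Fin N → Fin M)

/-- The wedge (Slater determinant) of a family of `N` vectors in `ℂ^M`:
`|v 0⟩ ∧ ⋯ ∧ |v (N-1)⟩ = ∑ σ, sgn σ • |v σ(0), …, v σ(N-1)⟩`. -/
def wedge {N M : ℕ} (v : Fin N → EuclideanSpace ℂ (Fin M)) : TensorPow N M :=
  WithLp.toLp 2 fun x => ∑ σ : Equiv.Perm (Fin N), ((Equiv.Perm.sign σ : ℤ) : ℂ) * ∏ k, v (σ k) (x k)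

/-- The exterior power `⋀^N ℂ^M`, i.e. the subspace of antisymmetric tensors
in `(ℂ^M)^{⊗N}`. -/
def exteriorPow (N M : ℕ) : Submodule ℂ (TensorPow N M) where
  carrier := {ψ | ∀ σ : Equiv.Perm (Fin N), ∀ x : Fin N → Fin M,
    ψ (x ∘ σ) = ((Equiv.Perm.sign σ : ℤ) : ℂ) * ψ x}
  add_mem' := by
    intro a b ha hb σ x
    have h1 := ha σ x
    have h2 := hb σ x
    show a (x ∘ σ) + b (x ∘ σ) = ((Equiv.Perm.sign σ : ℤ) : ℂ) * (a x + b x)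
    rw [h1, h2]; ring
  zero_mem' := by
    intro σ x
    show (0 : ℂ) = ((Equiv.Perm.sign σ : ℤ) : ℂ) * (0 : ℂ)
    ring
  smul_mem' := by
    intro c a ha σ x
    have h1 := ha σ x
    show c * a (x ∘ σ) = ((Equiv.Perm.sign σ : ℤ) : ℂ) * (c * a x)
    rw [h1]; ring

/-- A decomposable (Slater determinant) vector in `⋀^N ℂ^M`. -/
def IsSlater {N M : ℕ} (ψ : TensorPow N M) : Prop :=
  ∃ v : Fin N → EuclideanSpace ℂ (Fin M), ψ = wedge v


open scoped ComplexConjugate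

lemma wedge_pair_apply (v w : EuclideanSpace ℂ (Fin 4)) (x : Fin 2 → Fin 4) :
    wedge ![v, w] x = v (x 0) * w (x 1) - w (x 0) * v (x 1) := by
  have huniv : (Finset.univ : Finset (Equiv.Perm (Fin 2))) = {1, Equiv.swap 0 1} := by decide
  rw [wedge, huniv]
  simp only [WithLp.ofLp_toLp]
  rw [Finset.sum_insert (by decide), Finset.sum_singleton]
  simp [Equiv.Perm.sign_swap (by decide : (0:Fin 2) ≠ 1), Fin.prod_univ_two]
  ring

lemma inner_wedge_pair (v w v' w' : EuclideanSpace ℂ (Fin 4)) :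
    ⟪wedge ![v, w], wedge ![v', w']⟫_ℂ
      = 2 * (⟪v, v'⟫_ℂ * ⟪w, w'⟫_ℂ - ⟪v, w'⟫_ℂ * ⟪w, v'⟫_ℂ) := by
  have h1 : ⟪wedge ![v, w], wedge ![v', w']⟫_ℂ
      = ∑ x : Fin 2 → Fin 4, conj (wedge ![v, w] x) * (wedge ![v', w'] x) := by
    rw [PiLp.inner_apply]
    exact Finset.sum_congr rfl (fun _ _ => by rw [RCLike.inner_apply]; ring)
  rw [h1]
  have h2 : ∀ (u u' : EuclideanSpace ℂ (Fin 4)), ⟪u, u'⟫_ℂ = ∑ i, conj (u i) * u' i := by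
    intro u u'; rw [PiLp.inner_apply]
    exact Finset.sum_congr rfl (fun _ _ => by rw [RCLike.inner_apply]; ring)
  rw [h2 v v', h2 w w', h2 v w', h2 w v']
  rw [← Equiv.sum_comp (finTwoArrowEquiv (Fin 4)).symm
      (fun x => conj (wedge ![v, w] x) * (wedge ![v', w'] x))]
  rw [Fintype.sum_prod_type]
  simp only [wedge_pair_apply, finTwoArrowEquiv_symm_apply, Matrix.cons_val_zero,
    Matrix.cons_val_one, Matrix.head_cons, map_sub, map_mul]
  simp only [Fin.sum_univ_four]
  ring
lemma parseval (b : OrthonormalBasis (Fin 4) ℂ (EuclideanSpace ℂ (Fin 4)))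
    (u u' : EuclideanSpace ℂ (Fin 4)) :
    ⟪u, u'⟫_ℂ = ∑ i : Fin 4, conj ⟪b i, u⟫_ℂ * ⟪b i, u'⟫_ℂ := by
  have := b.repr.inner_map_map u u'
  rw [← this, PiLp.inner_apply]
  simp only [OrthonormalBasis.repr_apply_apply]
  exact Finset.sum_congr rfl (fun _ _ => by rw [RCLike.inner_apply]; ring)

lemma wedge_smul_sub (v w : EuclideanSpace ℂ (Fin 4)) (μ : ℂ) :
    wedge ![v, w - μ • v] = wedge ![v, w] := by
  ext x
  simp only [wedge_pair_apply, PiLp.sub_apply, PiLp.smul_apply, smul_eq_mul]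
  ring

lemma wedge_zero_right (v : EuclideanSpace ℂ (Fin 4)) : wedge ![v, (0:EuclideanSpace ℂ (Fin 4))] = 0 := by
  ext x
  simp [wedge_pair_apply]

lemma wedge_zero_left (w : EuclideanSpace ℂ (Fin 4)) : wedge ![(0:EuclideanSpace ℂ (Fin 4)), w] = 0 := by
  ext x
  simp [wedge_pair_apply]

lemma wedge_ne_zero_of_inner (v w : EuclideanSpace ℂ (Fin 4))
    (h : ⟪v, v⟫_ℂ * ⟪w, w⟫_ℂ - ⟪v, w⟫_ℂ * ⟪w, v⟫_ℂ ≠ 0) : wedge ![v, w] ≠ 0 := by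
  intro hz
  have := inner_wedge_pair v w v w
  rw [hz, inner_zero_left] at this
  exact h ((mul_eq_zero.mp this.symm).resolve_left two_ne_zero)
lemma key2 (x y u v s t : ℂ) (h1 : conj x * u + conj y * v = 0)
    (h2 : conj x * s + conj y * t = 0) :
    x * (u * t - v * s) = 0 ∧ y * (u * t - v * s) = 0 := by
  constructor
  · have hx : conj x * (u * t - v * s) = 0 := by linear_combination t * h1 - v * h2
    rcases mul_eq_zero.mp hx with h | h
    · rw [starRingEnd_apply, star_eq_zero] at h
      rw [h, zero_mul]
    · rw [h, mul_zero]
  · have hy : conj y * (u * t - v * s) = 0 := by linear_combination u * h2 - s * h1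
    rcases mul_eq_zero.mp hy with h | h
    · rw [starRingEnd_apply, star_eq_zero] at h
      rw [h, zero_mul]
    · rw [h, mul_zero]
lemma dichotomy (A1 B1 C1 D1 A2 B2 C2 D2 A3 B3 C3 D3 : ℂ)
    (hAB1 : A1 * B1 = 0) (hAB2 : A2 * B2 = 0) (hAB3 : A3 * B3 = 0)
    (h12 : conj A1 * A2 + conj B1 * B2 + conj C1 * C2 + conj D1 * D2 = 0)
    (h13 : conj A1 * A3 + conj B1 * B3 + conj C1 * C3 + conj D1 * D3 = 0)
    (h23 : conj A2 * A3 + conj B2 * B3 + conj C2 * C3 + conj D2 * D3 = 0) :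
    A1 * (C2 * D3 - D2 * C3) - C1 * (A2 * D3 - D2 * A3) + D1 * (A2 * C3 - C2 * A3) = 0 ∨
    B1 * (C2 * D3 - D2 * C3) - C1 * (B2 * D3 - D2 * B3) + D1 * (B2 * C3 - C2 * B3) = 0 := by
  have h21 : conj A2 * A1 + conj B2 * B1 + conj C2 * C1 + conj D2 * D1 = 0 := by
    have h := congrArg conj h12
    simp only [map_add, map_mul, Complex.conj_conj, map_zero] at h
    linear_combination h
  have h31 : conj A3 * A1 + conj B3 * B1 + conj C3 * C1 + conj D3 * D1 = 0 := by
    have h := congrArg conj h13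
    simp only [map_add, map_mul, Complex.conj_conj, map_zero] at h
    linear_combination h
  have h32 : conj A3 * A2 + conj B3 * B2 + conj C3 * C2 + conj D3 * D2 = 0 := by
    have h := congrArg conj h23
    simp only [map_add, map_mul, Complex.conj_conj, map_zero] at h
    linear_combination h
  rcases mul_eq_zero.mp hAB1 with ha1 | hb1 <;> rcases mul_eq_zero.mp hAB2 with ha2 | hb2 <;>
    rcases mul_eq_zero.mp hAB3 with ha3 | hb3
  · left; rw [ha1, ha2, ha3]; ring
  · -- aab
    subst ha1; subst ha2; subst hb3
    simp only [map_zero, zero_mul, mul_zero, add_zero, zero_add] at h31 h32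
    obtain ⟨k1, k2⟩ := key2 C3 D3 C1 D1 C2 D2 h31 h32
    rcases mul_eq_zero.mp k1 with hc | hΔ
    · rcases mul_eq_zero.mp k2 with hd | hΔ
      · right; rw [hc, hd]; ring
      · left; linear_combination A3 * hΔ
    · left; linear_combination A3 * hΔ
  · -- aba
    subst ha1; subst hb2; subst ha3
    simp only [map_zero, zero_mul, mul_zero, add_zero, zero_add] at h21 h23
    obtain ⟨k1, k2⟩ := key2 C2 D2 C1 D1 C3 D3 h21 h23
    rcases mul_eq_zero.mp k1 with hc | hΔ
    · rcases mul_eq_zero.mp k2 with hd | hΔ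
      · right; rw [hc, hd]; ring
      · left; linear_combination (-A2) * hΔ
    · left; linear_combination (-A2) * hΔ
  · -- abb
    subst ha1; subst hb2; subst hb3
    simp only [map_zero, zero_mul, mul_zero, add_zero, zero_add] at h12 h13
    obtain ⟨k1, k2⟩ := key2 C1 D1 C2 D2 C3 D3 h12 h13
    rcases mul_eq_zero.mp k1 with hc | hΔ
    · rcases mul_eq_zero.mp k2 with hd | hΔ
      · left; rw [hc, hd]; ring
      · right; linear_combination B1 * hΔ
    · right; linear_combination B1 * hΔ
  · -- baa
    subst hb1; subst ha2; subst ha3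
    simp only [map_zero, zero_mul, mul_zero, add_zero, zero_add] at h12 h13
    obtain ⟨k1, k2⟩ := key2 C1 D1 C2 D2 C3 D3 h12 h13
    rcases mul_eq_zero.mp k1 with hc | hΔ
    · rcases mul_eq_zero.mp k2 with hd | hΔ
      · right; rw [hc, hd]; ring
      · left; linear_combination A1 * hΔ
    · left; linear_combination A1 * hΔ
  · -- bab
    subst hb1; subst ha2; subst hb3
    simp only [map_zero, zero_mul, mul_zero, add_zero, zero_add] at h21 h23
    obtain ⟨k1, k2⟩ := key2 C2 D2 C1 D1 C3 D3 h21 h23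
    rcases mul_eq_zero.mp k1 with hc | hΔ
    · rcases mul_eq_zero.mp k2 with hd | hΔ
      · left; rw [hc, hd]; ring
      · right; linear_combination (-B2) * hΔ
    · right; linear_combination (-B2) * hΔ
  · -- bba
    subst hb1; subst hb2; subst ha3
    simp only [map_zero, zero_mul, mul_zero, add_zero, zero_add] at h31 h32
    obtain ⟨k1, k2⟩ := key2 C3 D3 C1 D1 C2 D2 h31 h32
    rcases mul_eq_zero.mp k1 with hc | hΔ
    · rcases mul_eq_zero.mp k2 with hd | hΔ
      · left; rw [hc, hd]; ring
      · right; linear_combination B3 * hΔ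
    · right; linear_combination B3 * hΔ
  · right; rw [hb1, hb2, hb3]; ring

lemma conj_ne_zero {t : ℂ} (ht : t ≠ 0) : conj t ≠ 0 := by
  intro h
  exact ht (by simpa using congrArg conj h)

lemma sum3_ne (z0 z1 z2 : ℂ) (h : ¬(z0 = 0 ∧ z1 = 0 ∧ z2 = 0)) :
    conj z0 * z0 + conj z1 * z1 + conj z2 * z2 ≠ 0 := by
  have e : conj z0 * z0 + conj z1 * z1 + conj z2 * z2
      = ((Complex.normSq z0 + Complex.normSq z1 + Complex.normSq z2 : ℝ) : ℂ) := by
    push_cast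
    rw [Complex.normSq_eq_conj_mul_self, Complex.normSq_eq_conj_mul_self,
      Complex.normSq_eq_conj_mul_self]
  rw [e, Complex.ofReal_ne_zero]
  intro h0
  have n0 := Complex.normSq_nonneg z0
  have n1 := Complex.normSq_nonneg z1
  have n2 := Complex.normSq_nonneg z2
  exact h ⟨Complex.normSq_eq_zero.mp (by linarith),
    Complex.normSq_eq_zero.mp (by linarith),
    Complex.normSq_eq_zero.mp (by linarith)⟩

lemma factor_ne (t z0 z1 z2 : ℂ) (ht : t ≠ 0) (hs : ¬(z0 = 0 ∧ z1 = 0 ∧ z2 = 0)) :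
    conj t * t * (conj z0 * z0 + conj z1 * z1 + conj z2 * z2) ≠ 0 :=
  mul_ne_zero (mul_ne_zero (conj_ne_zero ht) ht) (sum3_ne z0 z1 z2 hs)

set_option maxHeartbeats 3000000 in
/-- Five pairwise orthogonal nonzero decomposable 2-vectors in `⋀² ℂ⁴` in which
`ψ 0 = a ∧ b₁` and `ψ 1 = a ∧ b₂` share a common factor do not form an FUPB:
some nonzero decomposable 2-vector is orthogonal to all five. -/
theorem five_slaters_with_common_factor_not_FUPB
    (ψ : Fin 5 → TensorPow 2 4) (a b₁ b₂ : EuclideanSpace ℂ (Fin 4))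
    (h0 : ψ 0 = wedge ![a, b₁]) (h1 : ψ 1 = wedge ![a, b₂])
    (hslater : ∀ i, IsSlater (ψ i)) (hne : ∀ i, ψ i ≠ 0)
    (horth : ∀ i j, i ≠ j → ⟪ψ i, ψ j⟫_ℂ = 0) :
    ∃ v w : EuclideanSpace ℂ (Fin 4),
      wedge ![v, w] ≠ 0 ∧ ∀ i, ⟪ψ i, wedge ![v, w]⟫_ℂ = 0 := by
  classical
  have two_ne : (2:ℂ) ≠ 0 := two_ne_zero
  -- decompose ψ 2, ψ 3, ψ 4
  obtain ⟨c2, d2, hψ2⟩ : ∃ c d, ψ 2 = wedge ![c, d] := by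
    obtain ⟨v, hv⟩ := hslater 2
    exact ⟨v 0, v 1, by rw [hv]; exact congrArg wedge (by funext i; fin_cases i <;> rfl)⟩
  obtain ⟨c3, d3, hψ3⟩ : ∃ c d, ψ 3 = wedge ![c, d] := by
    obtain ⟨v, hv⟩ := hslater 3
    exact ⟨v 0, v 1, by rw [hv]; exact congrArg wedge (by funext i; fin_cases i <;> rfl)⟩
  obtain ⟨c4, d4, hψ4⟩ : ∃ c d, ψ 4 = wedge ![c, d] := by
    obtain ⟨v, hv⟩ := hslater 4
    exact ⟨v 0, v 1, by rw [hv]; exact congrArg wedge (by funext i; fin_cases i <;> rfl)⟩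
  -- a ≠ 0
  have ha : a ≠ 0 := by
    rintro rfl
    exact hne 0 (by rw [h0, wedge_zero_left])
  have haa : ⟪a, a⟫_ℂ ≠ 0 := inner_self_ne_zero.mpr ha
  -- orthogonalize b₁, b₂ against a
  set b1' : EuclideanSpace ℂ (Fin 4) := b₁ - (⟪a, b₁⟫_ℂ / ⟪a, a⟫_ℂ) • a with hb1'def
  set b2' : EuclideanSpace ℂ (Fin 4) := b₂ - (⟪a, b₂⟫_ℂ / ⟪a, a⟫_ℂ) • a with hb2'def
  have hψ0' : ψ 0 = wedge ![a, b1'] := by rw [h0, hb1'def, wedge_smul_sub]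
  have hψ1' : ψ 1 = wedge ![a, b2'] := by rw [h1, hb2'def, wedge_smul_sub]
  have hab1' : ⟪a, b1'⟫_ℂ = 0 := by
    rw [hb1'def, inner_sub_right, inner_smul_right, div_mul_cancel₀ _ haa, sub_self]
  have hab2' : ⟪a, b2'⟫_ℂ = 0 := by
    rw [hb2'def, inner_sub_right, inner_smul_right, div_mul_cancel₀ _ haa, sub_self]
  have hb1'a : ⟪b1', a⟫_ℂ = 0 := by rw [← inner_conj_symm, hab1', map_zero]
  have hb2'a : ⟪b2', a⟫_ℂ = 0 := by rw [← inner_conj_symm, hab2', map_zero]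
  have hb1'ne : b1' ≠ 0 := by
    intro h
    exact hne 0 (by rw [hψ0', h, wedge_zero_right])
  have hb2'ne : b2' ≠ 0 := by
    intro h
    exact hne 1 (by rw [hψ1', h, wedge_zero_right])
  have hb1'b2' : ⟪b1', b2'⟫_ℂ = 0 := by
    have h01 := horth 0 1 (by decide)
    rw [hψ0', hψ1', inner_wedge_pair, hab2', hb1'a] at h01
    have h' : (2:ℂ) * (⟪a, a⟫_ℂ * ⟪b1', b2'⟫_ℂ) = 0 := by linear_combination h01
    exact (mul_eq_zero.mp ((mul_eq_zero.mp h').resolve_left two_ne)).resolve_left haa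
  have hb2'b1' : ⟪b2', b1'⟫_ℂ = 0 := by rw [← inner_conj_symm, hb1'b2', map_zero]
  -- orthonormal basis adapted to a, b1', b2'
  have hna : ((‖a‖ : ℂ)) ≠ 0 := by
    simpa using (norm_ne_zero_iff.mpr ha)
  have hnb1 : ((‖b1'‖ : ℂ)) ≠ 0 := by
    simpa using (norm_ne_zero_iff.mpr hb1'ne)
  have hnb2 : ((‖b2'‖ : ℂ)) ≠ 0 := by
    simpa using (norm_ne_zero_iff.mpr hb2'ne)
  set u : Fin 4 → EuclideanSpace ℂ (Fin 4) :=
    ![(‖a‖ : ℂ)⁻¹ • a, (‖b1'‖ : ℂ)⁻¹ • b1', (‖b2'‖ : ℂ)⁻¹ • b2', 0] with hudef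
  have hnorm1 : ∀ (x : EuclideanSpace ℂ (Fin 4)), x ≠ 0 →
      ⟪(‖x‖ : ℂ)⁻¹ • x, (‖x‖ : ℂ)⁻¹ • x⟫_ℂ = 1 := by
    intro x hx
    rw [inner_smul_left, inner_smul_right, inner_self_eq_norm_sq_to_K, map_inv₀,
      Complex.conj_ofReal]
    have : ((‖x‖ : ℂ)) ≠ 0 := by simpa using (norm_ne_zero_iff.mpr hx)
    field_simp
    rfl
  have huu : ∀ i ∈ ({0, 1, 2} : Set (Fin 4)), ∀ j ∈ ({0, 1, 2} : Set (Fin 4)),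
      ⟪u i, u j⟫_ℂ = if i = j then 1 else 0 := by
    intro i hi j hj
    simp only [Set.mem_insert_iff, Set.mem_singleton_iff] at hi hj
    have offd : ∀ (x y : EuclideanSpace ℂ (Fin 4)) (r t : ℂ), ⟪x, y⟫_ℂ = 0 →
        ⟪r • x, t • y⟫_ℂ = 0 := by
      intro x y r t hxy
      rw [inner_smul_left, inner_smul_right, hxy]; ring
    rcases hi with rfl | rfl | rfl <;> rcases hj with rfl | rfl | rfl <;>
      simp only [hudef, Matrix.cons_val_zero, Matrix.cons_val_one, Matrix.head_cons,
        Matrix.cons_val_two, Matrix.tail_cons]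
    · rw [if_pos trivial]; exact hnorm1 a ha
    · rw [if_neg (by decide)]; exact offd _ _ _ _ hab1'
    · rw [if_neg (by decide)]; exact offd _ _ _ _ hab2'
    · rw [if_neg (by decide)]; exact offd _ _ _ _ hb1'a
    · rw [if_pos trivial]; exact hnorm1 b1' hb1'ne
    · rw [if_neg (by decide)]; exact offd _ _ _ _ hb1'b2'
    · rw [if_neg (by decide)]; exact offd _ _ _ _ hb2'a
    · rw [if_neg (by decide)]; exact offd _ _ _ _ hb2'b1'
    · rw [if_pos trivial]; exact hnorm1 b2' hb2'ne
  have huo : Orthonormal ℂ (({0, 1, 2} : Set (Fin 4)).restrict u) := by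
    rw [orthonormal_iff_ite]
    rintro ⟨i, hi⟩ ⟨j, hj⟩
    change ⟪u i, u j⟫_ℂ = _
    rw [huu i hi j hj]
    simp [Subtype.ext_iff]
  have hcard : Module.finrank ℂ (EuclideanSpace ℂ (Fin 4)) = Fintype.card (Fin 4) := by
    simp [finrank_euclideanSpace]
  obtain ⟨b, hb⟩ := huo.exists_orthonormalBasis_extension_of_card_eq hcard
  have hb0 : b 0 = (‖a‖ : ℂ)⁻¹ • a := by
    simpa [hudef] using hb 0 (by simp)
  have hb1 : b 1 = (‖b1'‖ : ℂ)⁻¹ • b1' := by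
    simpa [hudef] using hb 1 (by simp)
  have hb2 : b 2 = (‖b2'‖ : ℂ)⁻¹ • b2' := by
    simpa [hudef] using hb 2 (by simp)
  have hae : a = (‖a‖ : ℂ) • b 0 := by
    rw [hb0, smul_smul, mul_inv_cancel₀ hna, one_smul]
  have hb1e : b1' = (‖b1'‖ : ℂ) • b 1 := by
    rw [hb1, smul_smul, mul_inv_cancel₀ hnb1, one_smul]
  have hb2e : b2' = (‖b2'‖ : ℂ) • b 2 := by
    rw [hb2, smul_smul, mul_inv_cancel₀ hnb2, one_smul]
  have hbij : ∀ i j, ⟪b i, b j⟫_ℂ = if i = j then 1 else 0 := orthonormal_iff_ite.mp b.orthonormal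
  have hb00 : ⟪b 0, (b 0 : EuclideanSpace ℂ (Fin 4))⟫_ℂ = 1 := by simpa using hbij 0 0
  have hb01 : ⟪b 0, (b 1 : EuclideanSpace ℂ (Fin 4))⟫_ℂ = 0 := by simpa using hbij 0 1
  have hb02 : ⟪b 0, (b 2 : EuclideanSpace ℂ (Fin 4))⟫_ℂ = 0 := by simpa using hbij 0 2
  have hb03 : ⟪b 0, (b 3 : EuclideanSpace ℂ (Fin 4))⟫_ℂ = 0 := by simpa using hbij 0 3
  have hb10 : ⟪b 1, (b 0 : EuclideanSpace ℂ (Fin 4))⟫_ℂ = 0 := by simpa using hbij 1 0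
  have hb11 : ⟪b 1, (b 1 : EuclideanSpace ℂ (Fin 4))⟫_ℂ = 1 := by simpa using hbij 1 1
  have hb12 : ⟪b 1, (b 2 : EuclideanSpace ℂ (Fin 4))⟫_ℂ = 0 := by simpa using hbij 1 2
  have hb13 : ⟪b 1, (b 3 : EuclideanSpace ℂ (Fin 4))⟫_ℂ = 0 := by simpa using hbij 1 3
  have hb20 : ⟪b 2, (b 0 : EuclideanSpace ℂ (Fin 4))⟫_ℂ = 0 := by simpa using hbij 2 0
  have hb21 : ⟪b 2, (b 1 : EuclideanSpace ℂ (Fin 4))⟫_ℂ = 0 := by simpa using hbij 2 1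
  have hb22 : ⟪b 2, (b 2 : EuclideanSpace ℂ (Fin 4))⟫_ℂ = 1 := by simpa using hbij 2 2
  have hb23 : ⟪b 2, (b 3 : EuclideanSpace ℂ (Fin 4))⟫_ℂ = 0 := by simpa using hbij 2 3
  have hb30 : ⟪b 3, (b 0 : EuclideanSpace ℂ (Fin 4))⟫_ℂ = 0 := by simpa using hbij 3 0
  have hb31 : ⟪b 3, (b 1 : EuclideanSpace ℂ (Fin 4))⟫_ℂ = 0 := by simpa using hbij 3 1
  have hb32 : ⟪b 3, (b 2 : EuclideanSpace ℂ (Fin 4))⟫_ℂ = 0 := by simpa using hbij 3 2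
  have hb33 : ⟪b 3, (b 3 : EuclideanSpace ℂ (Fin 4))⟫_ℂ = 1 := by simpa using hbij 3 3
  have h02 := horth 0 2 (by decide)
  rw [hψ0', hψ2, inner_wedge_pair, hae, hb1e] at h02
  simp only [inner_smul_left, Complex.conj_ofReal] at h02
  have hp12_2 : (⟪b 0, c2⟫_ℂ * ⟪b 1, d2⟫_ℂ - ⟪b 1, c2⟫_ℂ * ⟪b 0, d2⟫_ℂ) = 0 := by
    have h' : (2 * (‖a‖:ℂ) * (‖b1'‖:ℂ)) * (⟪b 0, c2⟫_ℂ * ⟪b 1, d2⟫_ℂ - ⟪b 1, c2⟫_ℂ * ⟪b 0, d2⟫_ℂ) = 0 := by linear_combination h02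
    exact (mul_eq_zero.mp h').resolve_left (mul_ne_zero (mul_ne_zero two_ne hna) hnb1)
  have h12 := horth 1 2 (by decide)
  rw [hψ1', hψ2, inner_wedge_pair, hae, hb2e] at h12
  simp only [inner_smul_left, Complex.conj_ofReal] at h12
  have hp13_2 : (⟪b 0, c2⟫_ℂ * ⟪b 2, d2⟫_ℂ - ⟪b 2, c2⟫_ℂ * ⟪b 0, d2⟫_ℂ) = 0 := by
    have h' : (2 * (‖a‖:ℂ) * (‖b2'‖:ℂ)) * (⟪b 0, c2⟫_ℂ * ⟪b 2, d2⟫_ℂ - ⟪b 2, c2⟫_ℂ * ⟪b 0, d2⟫_ℂ) = 0 := by linear_combination h12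
    exact (mul_eq_zero.mp h').resolve_left (mul_ne_zero (mul_ne_zero two_ne hna) hnb2)
  have hAB_2 : (⟪b 0, c2⟫_ℂ * ⟪b 3, d2⟫_ℂ - ⟪b 3, c2⟫_ℂ * ⟪b 0, d2⟫_ℂ) * (⟪b 1, c2⟫_ℂ * ⟪b 2, d2⟫_ℂ - ⟪b 2, c2⟫_ℂ * ⟪b 1, d2⟫_ℂ) = 0 := by
    linear_combination (⟪b 1, c2⟫_ℂ * ⟪b 3, d2⟫_ℂ - ⟪b 3, c2⟫_ℂ * ⟪b 1, d2⟫_ℂ) * hp13_2 - (⟪b 2, c2⟫_ℂ * ⟪b 3, d2⟫_ℂ - ⟪b 3, c2⟫_ℂ * ⟪b 2, d2⟫_ℂ) * hp12_2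
  have h03 := horth 0 3 (by decide)
  rw [hψ0', hψ3, inner_wedge_pair, hae, hb1e] at h03
  simp only [inner_smul_left, Complex.conj_ofReal] at h03
  have hp12_3 : (⟪b 0, c3⟫_ℂ * ⟪b 1, d3⟫_ℂ - ⟪b 1, c3⟫_ℂ * ⟪b 0, d3⟫_ℂ) = 0 := by
    have h' : (2 * (‖a‖:ℂ) * (‖b1'‖:ℂ)) * (⟪b 0, c3⟫_ℂ * ⟪b 1, d3⟫_ℂ - ⟪b 1, c3⟫_ℂ * ⟪b 0, d3⟫_ℂ) = 0 := by linear_combination h03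
    exact (mul_eq_zero.mp h').resolve_left (mul_ne_zero (mul_ne_zero two_ne hna) hnb1)
  have h13 := horth 1 3 (by decide)
  rw [hψ1', hψ3, inner_wedge_pair, hae, hb2e] at h13
  simp only [inner_smul_left, Complex.conj_ofReal] at h13
  have hp13_3 : (⟪b 0, c3⟫_ℂ * ⟪b 2, d3⟫_ℂ - ⟪b 2, c3⟫_ℂ * ⟪b 0, d3⟫_ℂ) = 0 := by
    have h' : (2 * (‖a‖:ℂ) * (‖b2'‖:ℂ)) * (⟪b 0, c3⟫_ℂ * ⟪b 2, d3⟫_ℂ - ⟪b 2, c3⟫_ℂ * ⟪b 0, d3⟫_ℂ) = 0 := by linear_combination h13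
    exact (mul_eq_zero.mp h').resolve_left (mul_ne_zero (mul_ne_zero two_ne hna) hnb2)
  have hAB_3 : (⟪b 0, c3⟫_ℂ * ⟪b 3, d3⟫_ℂ - ⟪b 3, c3⟫_ℂ * ⟪b 0, d3⟫_ℂ) * (⟪b 1, c3⟫_ℂ * ⟪b 2, d3⟫_ℂ - ⟪b 2, c3⟫_ℂ * ⟪b 1, d3⟫_ℂ) = 0 := by
    linear_combination (⟪b 1, c3⟫_ℂ * ⟪b 3, d3⟫_ℂ - ⟪b 3, c3⟫_ℂ * ⟪b 1, d3⟫_ℂ) * hp13_3 - (⟪b 2, c3⟫_ℂ * ⟪b 3, d3⟫_ℂ - ⟪b 3, c3⟫_ℂ * ⟪b 2, d3⟫_ℂ) * hp12_3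
  have h04 := horth 0 4 (by decide)
  rw [hψ0', hψ4, inner_wedge_pair, hae, hb1e] at h04
  simp only [inner_smul_left, Complex.conj_ofReal] at h04
  have hp12_4 : (⟪b 0, c4⟫_ℂ * ⟪b 1, d4⟫_ℂ - ⟪b 1, c4⟫_ℂ * ⟪b 0, d4⟫_ℂ) = 0 := by
    have h' : (2 * (‖a‖:ℂ) * (‖b1'‖:ℂ)) * (⟪b 0, c4⟫_ℂ * ⟪b 1, d4⟫_ℂ - ⟪b 1, c4⟫_ℂ * ⟪b 0, d4⟫_ℂ) = 0 := by linear_combination h04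
    exact (mul_eq_zero.mp h').resolve_left (mul_ne_zero (mul_ne_zero two_ne hna) hnb1)
  have h14 := horth 1 4 (by decide)
  rw [hψ1', hψ4, inner_wedge_pair, hae, hb2e] at h14
  simp only [inner_smul_left, Complex.conj_ofReal] at h14
  have hp13_4 : (⟪b 0, c4⟫_ℂ * ⟪b 2, d4⟫_ℂ - ⟪b 2, c4⟫_ℂ * ⟪b 0, d4⟫_ℂ) = 0 := by
    have h' : (2 * (‖a‖:ℂ) * (‖b2'‖:ℂ)) * (⟪b 0, c4⟫_ℂ * ⟪b 2, d4⟫_ℂ - ⟪b 2, c4⟫_ℂ * ⟪b 0, d4⟫_ℂ) = 0 := by linear_combination h14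
    exact (mul_eq_zero.mp h').resolve_left (mul_ne_zero (mul_ne_zero two_ne hna) hnb2)
  have hAB_4 : (⟪b 0, c4⟫_ℂ * ⟪b 3, d4⟫_ℂ - ⟪b 3, c4⟫_ℂ * ⟪b 0, d4⟫_ℂ) * (⟪b 1, c4⟫_ℂ * ⟪b 2, d4⟫_ℂ - ⟪b 2, c4⟫_ℂ * ⟪b 1, d4⟫_ℂ) = 0 := by
    linear_combination (⟪b 1, c4⟫_ℂ * ⟪b 3, d4⟫_ℂ - ⟪b 3, c4⟫_ℂ * ⟪b 1, d4⟫_ℂ) * hp13_4 - (⟪b 2, c4⟫_ℂ * ⟪b 3, d4⟫_ℂ - ⟪b 3, c4⟫_ℂ * ⟪b 2, d4⟫_ℂ) * hp12_4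
  have hP23 : (conj ⟪b 0, c2⟫_ℂ * conj ⟪b 3, d2⟫_ℂ - conj ⟪b 3, c2⟫_ℂ * conj ⟪b 0, d2⟫_ℂ) * (⟪b 0, c3⟫_ℂ * ⟪b 3, d3⟫_ℂ - ⟪b 3, c3⟫_ℂ * ⟪b 0, d3⟫_ℂ) + (conj ⟪b 1, c2⟫_ℂ * conj ⟪b 2, d2⟫_ℂ - conj ⟪b 2, c2⟫_ℂ * conj ⟪b 1, d2⟫_ℂ) * (⟪b 1, c3⟫_ℂ * ⟪b 2, d3⟫_ℂ - ⟪b 2, c3⟫_ℂ * ⟪b 1, d3⟫_ℂ) + (conj ⟪b 1, c2⟫_ℂ * conj ⟪b 3, d2⟫_ℂ - conj ⟪b 3, c2⟫_ℂ * conj ⟪b 1, d2⟫_ℂ) * (⟪b 1, c3⟫_ℂ * ⟪b 3, d3⟫_ℂ - ⟪b 3, c3⟫_ℂ * ⟪b 1, d3⟫_ℂ) + (conj ⟪b 2, c2⟫_ℂ * conj ⟪b 3, d2⟫_ℂ - conj ⟪b 3, c2⟫_ℂ * conj ⟪b 2, d2⟫_ℂ) * (⟪b 2, c3⟫_ℂ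 * ⟪b 3, d3⟫_ℂ - ⟪b 3, c3⟫_ℂ * ⟪b 2, d3⟫_ℂ) = 0 := by
    have h := horth 2 3 (by decide)
    rw [hψ2, hψ3, inner_wedge_pair, parseval b c2 c3, parseval b d2 d3,
      parseval b c2 d3, parseval b d2 c3] at h
    simp only [Fin.sum_univ_four] at h
    linear_combination (1/2 : ℂ) * h - (conj ⟪b 0, c2⟫_ℂ * conj ⟪b 1, d2⟫_ℂ - conj ⟪b 1, c2⟫_ℂ * conj ⟪b 0, d2⟫_ℂ) * hp12_3 - (conj ⟪b 0, c2⟫_ℂ * conj ⟪b 2, d2⟫_ℂ - conj ⟪b 2, c2⟫_ℂ * conj ⟪b 0, d2⟫_ℂ) * hp13_3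
  have hP24 : (conj ⟪b 0, c2⟫_ℂ * conj ⟪b 3, d2⟫_ℂ - conj ⟪b 3, c2⟫_ℂ * conj ⟪b 0, d2⟫_ℂ) * (⟪b 0, c4⟫_ℂ * ⟪b 3, d4⟫_ℂ - ⟪b 3, c4⟫_ℂ * ⟪b 0, d4⟫_ℂ) + (conj ⟪b 1, c2⟫_ℂ * conj ⟪b 2, d2⟫_ℂ - conj ⟪b 2, c2⟫_ℂ * conj ⟪b 1, d2⟫_ℂ) * (⟪b 1, c4⟫_ℂ * ⟪b 2, d4⟫_ℂ - ⟪b 2, c4⟫_ℂ * ⟪b 1, d4⟫_ℂ) + (conj ⟪b 1, c2⟫_ℂ * conj ⟪b 3, d2⟫_ℂ - conj ⟪b 3, c2⟫_ℂ * conj ⟪b 1, d2⟫_ℂ) * (⟪b 1, c4⟫_ℂ * ⟪b 3, d4⟫_ℂ - ⟪b 3, c4⟫_ℂ * ⟪b 1, d4⟫_ℂ) + (conj ⟪b 2, c2⟫_ℂ * conj ⟪b 3, d2⟫_ℂ - conj ⟪b 3, c2⟫_ℂ * conj ⟪b 2, d2⟫_ℂ) * (⟪b 2, c4⟫_ℂ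 * ⟪b 3, d4⟫_ℂ - ⟪b 3, c4⟫_ℂ * ⟪b 2, d4⟫_ℂ) = 0 := by
    have h := horth 2 4 (by decide)
    rw [hψ2, hψ4, inner_wedge_pair, parseval b c2 c4, parseval b d2 d4,
      parseval b c2 d4, parseval b d2 c4] at h
    simp only [Fin.sum_univ_four] at h
    linear_combination (1/2 : ℂ) * h - (conj ⟪b 0, c2⟫_ℂ * conj ⟪b 1, d2⟫_ℂ - conj ⟪b 1, c2⟫_ℂ * conj ⟪b 0, d2⟫_ℂ) * hp12_4 - (conj ⟪b 0, c2⟫_ℂ * conj ⟪b 2, d2⟫_ℂ - conj ⟪b 2, c2⟫_ℂ * conj ⟪b 0, d2⟫_ℂ) * hp13_4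
  have hP34 : (conj ⟪b 0, c3⟫_ℂ * conj ⟪b 3, d3⟫_ℂ - conj ⟪b 3, c3⟫_ℂ * conj ⟪b 0, d3⟫_ℂ) * (⟪b 0, c4⟫_ℂ * ⟪b 3, d4⟫_ℂ - ⟪b 3, c4⟫_ℂ * ⟪b 0, d4⟫_ℂ) + (conj ⟪b 1, c3⟫_ℂ * conj ⟪b 2, d3⟫_ℂ - conj ⟪b 2, c3⟫_ℂ * conj ⟪b 1, d3⟫_ℂ) * (⟪b 1, c4⟫_ℂ * ⟪b 2, d4⟫_ℂ - ⟪b 2, c4⟫_ℂ * ⟪b 1, d4⟫_ℂ) + (conj ⟪b 1, c3⟫_ℂ * conj ⟪b 3, d3⟫_ℂ - conj ⟪b 3, c3⟫_ℂ * conj ⟪b 1, d3⟫_ℂ) * (⟪b 1, c4⟫_ℂ * ⟪b 3, d4⟫_ℂ - ⟪b 3, c4⟫_ℂ * ⟪b 1, d4⟫_ℂ) + (conj ⟪b 2, c3⟫_ℂ * conj ⟪b 3, d3⟫_ℂ - conj ⟪b 3, c3⟫_ℂ * conj ⟪b 2, d3⟫_ℂ) * (⟪b 2, c4⟫_ℂ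 * ⟪b 3, d4⟫_ℂ - ⟪b 3, c4⟫_ℂ * ⟪b 2, d4⟫_ℂ) = 0 := by
    have h := horth 3 4 (by decide)
    rw [hψ3, hψ4, inner_wedge_pair, parseval b c3 c4, parseval b d3 d4,
      parseval b c3 d4, parseval b d3 c4] at h
    simp only [Fin.sum_univ_four] at h
    linear_combination (1/2 : ℂ) * h - (conj ⟪b 0, c3⟫_ℂ * conj ⟪b 1, d3⟫_ℂ - conj ⟪b 1, c3⟫_ℂ * conj ⟪b 0, d3⟫_ℂ) * hp12_4 - (conj ⟪b 0, c3⟫_ℂ * conj ⟪b 2, d3⟫_ℂ - conj ⟪b 2, c3⟫_ℂ * conj ⟪b 0, d3⟫_ℂ) * hp13_4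
  rcases dichotomy (⟪b 0, c2⟫_ℂ * ⟪b 3, d2⟫_ℂ - ⟪b 3, c2⟫_ℂ * ⟪b 0, d2⟫_ℂ) (⟪b 1, c2⟫_ℂ * ⟪b 2, d2⟫_ℂ - ⟪b 2, c2⟫_ℂ * ⟪b 1, d2⟫_ℂ) (⟪b 1, c2⟫_ℂ * ⟪b 3, d2⟫_ℂ - ⟪b 3, c2⟫_ℂ * ⟪b 1, d2⟫_ℂ) (⟪b 2, c2⟫_ℂ * ⟪b 3, d2⟫_ℂ - ⟪b 3, c2⟫_ℂ * ⟪b 2, d2⟫_ℂ) (⟪b 0, c3⟫_ℂ * ⟪b 3, d3⟫_ℂ - ⟪b 3, c3⟫_ℂ * ⟪b 0, d3⟫_ℂ) (⟪b 1, c3⟫_ℂ * ⟪b 2, d3⟫_ℂ - ⟪b 2, c3⟫_ℂ * ⟪b 1, d3⟫_ℂ) (⟪b 1, c3⟫_ℂ * ⟪b 3, d3⟫_ℂ - ⟪b 3, c3⟫_ℂ * ⟪b 1, d3⟫_ℂ) (⟪b 2, c3⟫_ℂ * ⟪b 3, d3⟫_ℂ - ⟪b 3, c3⟫_ℂ * ⟪b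 2, d3⟫_ℂ) (⟪b 0, c4⟫_ℂ * ⟪b 3, d4⟫_ℂ - ⟪b 3, c4⟫_ℂ * ⟪b 0, d4⟫_ℂ) (⟪b 1, c4⟫_ℂ * ⟪b 2, d4⟫_ℂ - ⟪b 2, c4⟫_ℂ * ⟪b 1, d4⟫_ℂ) (⟪b 1, c4⟫_ℂ * ⟪b 3, d4⟫_ℂ - ⟪b 3, c4⟫_ℂ * ⟪b 1, d4⟫_ℂ) (⟪b 2, c4⟫_ℂ * ⟪b 3, d4⟫_ℂ - ⟪b 3, c4⟫_ℂ * ⟪b 2, d4⟫_ℂ) hAB_2 hAB_3 hAB_4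
    (by simp only [map_sub, map_mul]; linear_combination hP23)
    (by simp only [map_sub, map_mul]; linear_combination hP24)
    (by simp only [map_sub, map_mul]; linear_combination hP34) with hY | hQ
  · have hdet : Matrix.det !![conj (⟪b 0, c2⟫_ℂ * ⟪b 3, d2⟫_ℂ - ⟪b 3, c2⟫_ℂ * ⟪b 0, d2⟫_ℂ), conj (⟪b 1, c2⟫_ℂ * ⟪b 3, d2⟫_ℂ - ⟪b 3, c2⟫_ℂ * ⟪b 1, d2⟫_ℂ), conj (⟪b 2, c2⟫_ℂ * ⟪b 3, d2⟫_ℂ - ⟪b 3, c2⟫_ℂ * ⟪b 2, d2⟫_ℂ); conj (⟪b 0, c3⟫_ℂ * ⟪b 3, d3⟫_ℂ - ⟪b 3, c3⟫_ℂ * ⟪b 0, d3⟫_ℂ), conj (⟪b 1, c3⟫_ℂ * ⟪b 3, d3⟫_ℂ - ⟪b 3, c3⟫_ℂ * ⟪b 1, d3⟫_ℂ), conj (⟪b 2, c3⟫_ℂ * ⟪b 3, d3⟫_ℂ - ⟪b 3, c3⟫_ℂ * ⟪b 2, d3⟫_ℂ); conj (⟪b 0, c4⟫_ℂ * ⟪b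 3, d4⟫_ℂ - ⟪b 3, c4⟫_ℂ * ⟪b 0, d4⟫_ℂ), conj (⟪b 1, c4⟫_ℂ * ⟪b 3, d4⟫_ℂ - ⟪b 3, c4⟫_ℂ * ⟪b 1, d4⟫_ℂ), conj (⟪b 2, c4⟫_ℂ * ⟪b 3, d4⟫_ℂ - ⟪b 3, c4⟫_ℂ * ⟪b 2, d4⟫_ℂ)] = 0 := by
      have h' := congrArg conj hY
      simp only [map_sub, map_add, map_mul, map_zero] at h'
      rw [Matrix.det_fin_three]
      simp only [Matrix.cons_val', Matrix.cons_val_zero, Matrix.cons_val_one, Matrix.head_cons, Matrix.empty_val', Matrix.cons_val_fin_one, Matrix.head_fin_const, Matrix.of_apply, Matrix.cons_val_two, Matrix.tail_cons, Pi.zero_apply, map_sub, map_mul]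
      linear_combination h'
    obtain ⟨vv, hkne, hMk⟩ := Matrix.exists_mulVec_eq_zero_iff.mpr hdet
    have e2 := congrFun hMk 0
    have e3 := congrFun hMk 1
    have e4 := congrFun hMk 2
    simp only [Matrix.mulVec, dotProduct, Fin.sum_univ_three, Matrix.cons_val', Matrix.cons_val_zero, Matrix.cons_val_one, Matrix.head_cons, Matrix.empty_val', Matrix.cons_val_fin_one, Matrix.head_fin_const, Matrix.of_apply, Matrix.cons_val_two, Matrix.tail_cons, Pi.zero_apply,
      map_sub, map_mul] at e2 e3 e4
    have o0 : ⟪ψ 0, wedge ![vv 0 • b 0 + vv 1 • b 1 + vv 2 • b 2, b 3]⟫_ℂ = 0 := by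
      rw [hψ0', inner_wedge_pair, hae, hb1e]
      simp only [inner_add_left, inner_add_right, inner_sub_left, inner_sub_right, inner_smul_left, inner_smul_right, Complex.conj_ofReal, hb00, hb01, hb02, hb03, hb10, hb11, hb12, hb13, hb20, hb21, hb22, hb23, hb30, hb31, hb32, hb33]
      ring
    have o1 : ⟪ψ 1, wedge ![vv 0 • b 0 + vv 1 • b 1 + vv 2 • b 2, b 3]⟫_ℂ = 0 := by
      rw [hψ1', inner_wedge_pair, hae, hb2e]
      simp only [inner_add_left, inner_add_right, inner_sub_left, inner_sub_right, inner_smul_left, inner_smul_right, Complex.conj_ofReal, hb00, hb01, hb02, hb03, hb10, hb11, hb12, hb13, hb20, hb21, hb22, hb23, hb30, hb31, hb32, hb33]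
      ring
    have o2 : ⟪ψ 2, wedge ![vv 0 • b 0 + vv 1 • b 1 + vv 2 • b 2, b 3]⟫_ℂ = 0 := by
      rw [hψ2, inner_wedge_pair]
      have hcw : ⟪c2, vv 0 • b 0 + vv 1 • b 1 + vv 2 • b 2⟫_ℂ = vv 0 * conj ⟪b 0, c2⟫_ℂ + vv 1 * conj ⟪b 1, c2⟫_ℂ + vv 2 * conj ⟪b 2, c2⟫_ℂ := by
        rw [inner_add_right, inner_add_right, inner_smul_right, inner_smul_right, inner_smul_right, ← inner_conj_symm c2 (b 0), ← inner_conj_symm c2 (b 1), ← inner_conj_symm c2 (b 2)]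
      have hdw : ⟪d2, vv 0 • b 0 + vv 1 • b 1 + vv 2 • b 2⟫_ℂ = vv 0 * conj ⟪b 0, d2⟫_ℂ + vv 1 * conj ⟪b 1, d2⟫_ℂ + vv 2 * conj ⟪b 2, d2⟫_ℂ := by
        rw [inner_add_right, inner_add_right, inner_smul_right, inner_smul_right, inner_smul_right, ← inner_conj_symm d2 (b 0), ← inner_conj_symm d2 (b 1), ← inner_conj_symm d2 (b 2)]
      have hc3 : ⟪c2, (b 3 : EuclideanSpace ℂ (Fin 4))⟫_ℂ = conj ⟪b 3, c2⟫_ℂ := by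
        rw [← inner_conj_symm c2 (b 3)]
      have hd3 : ⟪d2, (b 3 : EuclideanSpace ℂ (Fin 4))⟫_ℂ = conj ⟪b 3, d2⟫_ℂ := by
        rw [← inner_conj_symm d2 (b 3)]
      rw [hcw, hdw, hc3, hd3]
      linear_combination (2:ℂ) * e2
    have o3 : ⟪ψ 3, wedge ![vv 0 • b 0 + vv 1 • b 1 + vv 2 • b 2, b 3]⟫_ℂ = 0 := by
      rw [hψ3, inner_wedge_pair]
      have hcw : ⟪c3, vv 0 • b 0 + vv 1 • b 1 + vv 2 • b 2⟫_ℂ = vv 0 * conj ⟪b 0, c3⟫_ℂ + vv 1 * conj ⟪b 1, c3⟫_ℂ + vv 2 * conj ⟪b 2, c3⟫_ℂ := by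
        rw [inner_add_right, inner_add_right, inner_smul_right, inner_smul_right, inner_smul_right, ← inner_conj_symm c3 (b 0), ← inner_conj_symm c3 (b 1), ← inner_conj_symm c3 (b 2)]
      have hdw : ⟪d3, vv 0 • b 0 + vv 1 • b 1 + vv 2 • b 2⟫_ℂ = vv 0 * conj ⟪b 0, d3⟫_ℂ + vv 1 * conj ⟪b 1, d3⟫_ℂ + vv 2 * conj ⟪b 2, d3⟫_ℂ := by
        rw [inner_add_right, inner_add_right, inner_smul_right, inner_smul_right, inner_smul_right, ← inner_conj_symm d3 (b 0), ← inner_conj_symm d3 (b 1), ← inner_conj_symm d3 (b 2)]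
      have hc3 : ⟪c3, (b 3 : EuclideanSpace ℂ (Fin 4))⟫_ℂ = conj ⟪b 3, c3⟫_ℂ := by
        rw [← inner_conj_symm c3 (b 3)]
      have hd3 : ⟪d3, (b 3 : EuclideanSpace ℂ (Fin 4))⟫_ℂ = conj ⟪b 3, d3⟫_ℂ := by
        rw [← inner_conj_symm d3 (b 3)]
      rw [hcw, hdw, hc3, hd3]
      linear_combination (2:ℂ) * e3
    have o4 : ⟪ψ 4, wedge ![vv 0 • b 0 + vv 1 • b 1 + vv 2 • b 2, b 3]⟫_ℂ = 0 := by
      rw [hψ4, inner_wedge_pair]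
      have hcw : ⟪c4, vv 0 • b 0 + vv 1 • b 1 + vv 2 • b 2⟫_ℂ = vv 0 * conj ⟪b 0, c4⟫_ℂ + vv 1 * conj ⟪b 1, c4⟫_ℂ + vv 2 * conj ⟪b 2, c4⟫_ℂ := by
        rw [inner_add_right, inner_add_right, inner_smul_right, inner_smul_right, inner_smul_right, ← inner_conj_symm c4 (b 0), ← inner_conj_symm c4 (b 1), ← inner_conj_symm c4 (b 2)]
      have hdw : ⟪d4, vv 0 • b 0 + vv 1 • b 1 + vv 2 • b 2⟫_ℂ = vv 0 * conj ⟪b 0, d4⟫_ℂ + vv 1 * conj ⟪b 1, d4⟫_ℂ + vv 2 * conj ⟪b 2, d4⟫_ℂ := by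
        rw [inner_add_right, inner_add_right, inner_smul_right, inner_smul_right, inner_smul_right, ← inner_conj_symm d4 (b 0), ← inner_conj_symm d4 (b 1), ← inner_conj_symm d4 (b 2)]
      have hc3 : ⟪c4, (b 3 : EuclideanSpace ℂ (Fin 4))⟫_ℂ = conj ⟪b 3, c4⟫_ℂ := by
        rw [← inner_conj_symm c4 (b 3)]
      have hd3 : ⟪d4, (b 3 : EuclideanSpace ℂ (Fin 4))⟫_ℂ = conj ⟪b 3, d4⟫_ℂ := by
        rw [← inner_conj_symm d4 (b 3)]
      rw [hcw, hdw, hc3, hd3]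
      linear_combination (2:ℂ) * e4
    refine ⟨vv 0 • b 0 + vv 1 • b 1 + vv 2 • b 2, b 3, ?_, fun i => ?_⟩
    · apply wedge_ne_zero_of_inner
      have hww : ⟪vv 0 • b 0 + vv 1 • b 1 + vv 2 • b 2, vv 0 • b 0 + vv 1 • b 1 + vv 2 • b 2⟫_ℂ
          = conj (vv 0) * vv 0 + conj (vv 1) * vv 1 + conj (vv 2) * vv 2 := by
        simp only [inner_add_left, inner_add_right, inner_sub_left, inner_sub_right, inner_smul_left, inner_smul_right, hb00, hb01, hb02, hb03, hb10, hb11, hb12, hb13, hb20, hb21, hb22, hb23, hb30, hb31, hb32, hb33]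
        ring
      have hw3 : ⟪vv 0 • b 0 + vv 1 • b 1 + vv 2 • b 2, b 3⟫_ℂ = 0 := by
        simp only [inner_add_left, inner_add_right, inner_sub_left, inner_sub_right, inner_smul_left, inner_smul_right, hb00, hb01, hb02, hb03, hb10, hb11, hb12, hb13, hb20, hb21, hb22, hb23, hb30, hb31, hb32, hb33]
        ring
      have h3w : ⟪b 3, vv 0 • b 0 + vv 1 • b 1 + vv 2 • b 2⟫_ℂ = 0 := by
        simp only [inner_add_left, inner_add_right, inner_sub_left, inner_sub_right, inner_smul_left, inner_smul_right, hb00, hb01, hb02, hb03, hb10, hb11, hb12, hb13, hb20, hb21, hb22, hb23, hb30, hb31, hb32, hb33]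
        ring
      have h33 : ⟪b 3, (b 3 : EuclideanSpace ℂ (Fin 4))⟫_ℂ = 1 := hb33
      rw [hww, hw3, h3w, h33]
      have hre : (conj (vv 0) * vv 0 + conj (vv 1) * vv 1 + conj (vv 2) * vv 2) * 1 - 0 * 0
          = conj (vv 0) * vv 0 + conj (vv 1) * vv 1 + conj (vv 2) * vv 2 := by ring
      rw [hre]
      refine sum3_ne _ _ _ ?_
      rintro ⟨hu0, hu1, hu2⟩
      exact hkne (by funext i; fin_cases i; exacts [hu0, hu1, hu2])
    · fin_cases i
      exacts [o0, o1, o2, o3, o4]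
  · have hdet : Matrix.det !![conj (⟪b 1, c2⟫_ℂ * ⟪b 2, d2⟫_ℂ - ⟪b 2, c2⟫_ℂ * ⟪b 1, d2⟫_ℂ), conj (⟪b 1, c2⟫_ℂ * ⟪b 3, d2⟫_ℂ - ⟪b 3, c2⟫_ℂ * ⟪b 1, d2⟫_ℂ), conj (⟪b 2, c2⟫_ℂ * ⟪b 3, d2⟫_ℂ - ⟪b 3, c2⟫_ℂ * ⟪b 2, d2⟫_ℂ); conj (⟪b 1, c3⟫_ℂ * ⟪b 2, d3⟫_ℂ - ⟪b 2, c3⟫_ℂ * ⟪b 1, d3⟫_ℂ), conj (⟪b 1, c3⟫_ℂ * ⟪b 3, d3⟫_ℂ - ⟪b 3, c3⟫_ℂ * ⟪b 1, d3⟫_ℂ), conj (⟪b 2, c3⟫_ℂ * ⟪b 3, d3⟫_ℂ - ⟪b 3, c3⟫_ℂ * ⟪b 2, d3⟫_ℂ); conj (⟪b 1, c4⟫_ℂ * ⟪b 2, d4⟫_ℂ - ⟪b 2, c4⟫_ℂ * ⟪b 1, d4⟫_ℂ), conj (⟪b 1, c4⟫_ℂ * ⟪b 3, d4⟫_ℂ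 - ⟪b 3, c4⟫_ℂ * ⟪b 1, d4⟫_ℂ), conj (⟪b 2, c4⟫_ℂ * ⟪b 3, d4⟫_ℂ - ⟪b 3, c4⟫_ℂ * ⟪b 2, d4⟫_ℂ)] = 0 := by
      have h' := congrArg conj hQ
      simp only [map_sub, map_add, map_mul, map_zero] at h'
      rw [Matrix.det_fin_three]
      simp only [Matrix.cons_val', Matrix.cons_val_zero, Matrix.cons_val_one, Matrix.head_cons, Matrix.empty_val', Matrix.cons_val_fin_one, Matrix.head_fin_const, Matrix.of_apply, Matrix.cons_val_two, Matrix.tail_cons, Pi.zero_apply, map_sub, map_mul]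
      linear_combination h'
    obtain ⟨z, hkne, hMk⟩ := Matrix.exists_mulVec_eq_zero_iff.mpr hdet
    have f2 := congrFun hMk 0
    have f3 := congrFun hMk 1
    have f4 := congrFun hMk 2
    simp only [Matrix.mulVec, dotProduct, Fin.sum_univ_three, Matrix.cons_val', Matrix.cons_val_zero, Matrix.cons_val_one, Matrix.head_cons, Matrix.empty_val', Matrix.cons_val_fin_one, Matrix.head_fin_const, Matrix.of_apply, Matrix.cons_val_two, Matrix.tail_cons, Pi.zero_apply,
      map_sub, map_mul] at f2 f3 f4
    have hzcase : z 0 ≠ 0 ∨ z 1 ≠ 0 ∨ z 2 ≠ 0 := by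
      by_contra hcon
      push_neg at hcon
      exact hkne (by funext i; fin_cases i; exacts [hcon.1, hcon.2.1, hcon.2.2])
    rcases hzcase with hz' | hz' | hz'
    · have o0 : ⟪ψ 0, wedge ![z 0 • b 1 - z 2 • b 3, z 0 • b 2 + z 1 • b 3]⟫_ℂ = 0 := by
        rw [hψ0', inner_wedge_pair, hae, hb1e]
        simp only [inner_add_left, inner_add_right, inner_sub_left, inner_sub_right, inner_smul_left, inner_smul_right, Complex.conj_ofReal, hb00, hb01, hb02, hb03, hb10, hb11, hb12, hb13, hb20, hb21, hb22, hb23, hb30, hb31, hb32, hb33]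
        ring
      have o1 : ⟪ψ 1, wedge ![z 0 • b 1 - z 2 • b 3, z 0 • b 2 + z 1 • b 3]⟫_ℂ = 0 := by
        rw [hψ1', inner_wedge_pair, hae, hb2e]
        simp only [inner_add_left, inner_add_right, inner_sub_left, inner_sub_right, inner_smul_left, inner_smul_right, Complex.conj_ofReal, hb00, hb01, hb02, hb03, hb10, hb11, hb12, hb13, hb20, hb21, hb22, hb23, hb30, hb31, hb32, hb33]
        ring
      have o2 : ⟪ψ 2, wedge ![z 0 • b 1 - z 2 • b 3, z 0 • b 2 + z 1 • b 3]⟫_ℂ = 0 := by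
        rw [hψ2, inner_wedge_pair]
        have hcg : ⟪c2, z 0 • b 1 - z 2 • b 3⟫_ℂ = z 0 * conj ⟪b 1, c2⟫_ℂ - z 2 * conj ⟪b 3, c2⟫_ℂ := by
          rw [inner_sub_right, inner_smul_right, inner_smul_right, ← inner_conj_symm c2 (b 1), ← inner_conj_symm c2 (b 3)]
        have hdg : ⟪d2, z 0 • b 1 - z 2 • b 3⟫_ℂ = z 0 * conj ⟪b 1, d2⟫_ℂ - z 2 * conj ⟪b 3, d2⟫_ℂ := by
          rw [inner_sub_right, inner_smul_right, inner_smul_right, ← inner_conj_symm d2 (b 1), ← inner_conj_symm d2 (b 3)]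
        have hch : ⟪c2, z 0 • b 2 + z 1 • b 3⟫_ℂ = z 0 * conj ⟪b 2, c2⟫_ℂ + z 1 * conj ⟪b 3, c2⟫_ℂ := by
          rw [inner_add_right, inner_smul_right, inner_smul_right, ← inner_conj_symm c2 (b 2), ← inner_conj_symm c2 (b 3)]
        have hdh : ⟪d2, z 0 • b 2 + z 1 • b 3⟫_ℂ = z 0 * conj ⟪b 2, d2⟫_ℂ + z 1 * conj ⟪b 3, d2⟫_ℂ := by
          rw [inner_add_right, inner_smul_right, inner_smul_right, ← inner_conj_symm d2 (b 2), ← inner_conj_symm d2 (b 3)]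
        rw [hcg, hdg, hch, hdh]
        linear_combination (2:ℂ) * z 0 * f2
      have o3 : ⟪ψ 3, wedge ![z 0 • b 1 - z 2 • b 3, z 0 • b 2 + z 1 • b 3]⟫_ℂ = 0 := by
        rw [hψ3, inner_wedge_pair]
        have hcg : ⟪c3, z 0 • b 1 - z 2 • b 3⟫_ℂ = z 0 * conj ⟪b 1, c3⟫_ℂ - z 2 * conj ⟪b 3, c3⟫_ℂ := by
          rw [inner_sub_right, inner_smul_right, inner_smul_right, ← inner_conj_symm c3 (b 1), ← inner_conj_symm c3 (b 3)]
        have hdg : ⟪d3, z 0 • b 1 - z 2 • b 3⟫_ℂ = z 0 * conj ⟪b 1, d3⟫_ℂ - z 2 * conj ⟪b 3, d3⟫_ℂ := by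
          rw [inner_sub_right, inner_smul_right, inner_smul_right, ← inner_conj_symm d3 (b 1), ← inner_conj_symm d3 (b 3)]
        have hch : ⟪c3, z 0 • b 2 + z 1 • b 3⟫_ℂ = z 0 * conj ⟪b 2, c3⟫_ℂ + z 1 * conj ⟪b 3, c3⟫_ℂ := by
          rw [inner_add_right, inner_smul_right, inner_smul_right, ← inner_conj_symm c3 (b 2), ← inner_conj_symm c3 (b 3)]
        have hdh : ⟪d3, z 0 • b 2 + z 1 • b 3⟫_ℂ = z 0 * conj ⟪b 2, d3⟫_ℂ + z 1 * conj ⟪b 3, d3⟫_ℂ := by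
          rw [inner_add_right, inner_smul_right, inner_smul_right, ← inner_conj_symm d3 (b 2), ← inner_conj_symm d3 (b 3)]
        rw [hcg, hdg, hch, hdh]
        linear_combination (2:ℂ) * z 0 * f3
      have o4 : ⟪ψ 4, wedge ![z 0 • b 1 - z 2 • b 3, z 0 • b 2 + z 1 • b 3]⟫_ℂ = 0 := by
        rw [hψ4, inner_wedge_pair]
        have hcg : ⟪c4, z 0 • b 1 - z 2 • b 3⟫_ℂ = z 0 * conj ⟪b 1, c4⟫_ℂ - z 2 * conj ⟪b 3, c4⟫_ℂ := by
          rw [inner_sub_right, inner_smul_right, inner_smul_right, ← inner_conj_symm c4 (b 1), ← inner_conj_symm c4 (b 3)]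
        have hdg : ⟪d4, z 0 • b 1 - z 2 • b 3⟫_ℂ = z 0 * conj ⟪b 1, d4⟫_ℂ - z 2 * conj ⟪b 3, d4⟫_ℂ := by
          rw [inner_sub_right, inner_smul_right, inner_smul_right, ← inner_conj_symm d4 (b 1), ← inner_conj_symm d4 (b 3)]
        have hch : ⟪c4, z 0 • b 2 + z 1 • b 3⟫_ℂ = z 0 * conj ⟪b 2, c4⟫_ℂ + z 1 * conj ⟪b 3, c4⟫_ℂ := by
          rw [inner_add_right, inner_smul_right, inner_smul_right, ← inner_conj_symm c4 (b 2), ← inner_conj_symm c4 (b 3)]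
        have hdh : ⟪d4, z 0 • b 2 + z 1 • b 3⟫_ℂ = z 0 * conj ⟪b 2, d4⟫_ℂ + z 1 * conj ⟪b 3, d4⟫_ℂ := by
          rw [inner_add_right, inner_smul_right, inner_smul_right, ← inner_conj_symm d4 (b 2), ← inner_conj_symm d4 (b 3)]
        rw [hcg, hdg, hch, hdh]
        linear_combination (2:ℂ) * z 0 * f4
      refine ⟨z 0 • b 1 - z 2 • b 3, z 0 • b 2 + z 1 • b 3, ?_, fun i => ?_⟩
      · apply wedge_ne_zero_of_inner
        have hgg : ⟪z 0 • b 1 - z 2 • b 3, z 0 • b 1 - z 2 • b 3⟫_ℂ = conj (z 0) * z 0 + conj (z 2) * z 2 := by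
          simp only [inner_add_left, inner_add_right, inner_sub_left, inner_sub_right, inner_smul_left, inner_smul_right, hb00, hb01, hb02, hb03, hb10, hb11, hb12, hb13, hb20, hb21, hb22, hb23, hb30, hb31, hb32, hb33]
          ring
        have hhh : ⟪z 0 • b 2 + z 1 • b 3, z 0 • b 2 + z 1 • b 3⟫_ℂ = conj (z 0) * z 0 + conj (z 1) * z 1 := by
          simp only [inner_add_left, inner_add_right, inner_sub_left, inner_sub_right, inner_smul_left, inner_smul_right, hb00, hb01, hb02, hb03, hb10, hb11, hb12, hb13, hb20, hb21, hb22, hb23, hb30, hb31, hb32, hb33]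
          ring
        have hgh : ⟪z 0 • b 1 - z 2 • b 3, z 0 • b 2 + z 1 • b 3⟫_ℂ = -(conj (z 2) * z 1) := by
          simp only [inner_add_left, inner_add_right, inner_sub_left, inner_sub_right, inner_smul_left, inner_smul_right, hb00, hb01, hb02, hb03, hb10, hb11, hb12, hb13, hb20, hb21, hb22, hb23, hb30, hb31, hb32, hb33]
          ring
        have hhg : ⟪z 0 • b 2 + z 1 • b 3, z 0 • b 1 - z 2 • b 3⟫_ℂ = -(conj (z 1) * z 2) := by
          simp only [inner_add_left, inner_add_right, inner_sub_left, inner_sub_right, inner_smul_left, inner_smul_right, hb00, hb01, hb02, hb03, hb10, hb11, hb12, hb13, hb20, hb21, hb22, hb23, hb30, hb31, hb32, hb33]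
          ring
        rw [hgg, hhh, hgh, hhg]
        have hre : (conj (z 0) * z 0 + conj (z 2) * z 2) * (conj (z 0) * z 0 + conj (z 1) * z 1) - (-(conj (z 2) * z 1)) * (-(conj (z 1) * z 2))
            = conj (z 0) * z 0 * (conj (z 0) * z 0 + conj (z 1) * z 1 + conj (z 2) * z 2) := by ring
        rw [hre]
        refine factor_ne _ _ _ _ hz' ?_
        rintro ⟨hu0, hu1, hu2⟩
        exact hkne (by funext i; fin_cases i; exacts [hu0, hu1, hu2])
      · fin_cases i
        exacts [o0, o1, o2, o3, o4]
    · have o0 : ⟪ψ 0, wedge ![z 1 • b 1 + z 2 • b 2, z 0 • b 2 + z 1 • b 3]⟫_ℂ = 0 := by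
        rw [hψ0', inner_wedge_pair, hae, hb1e]
        simp only [inner_add_left, inner_add_right, inner_sub_left, inner_sub_right, inner_smul_left, inner_smul_right, Complex.conj_ofReal, hb00, hb01, hb02, hb03, hb10, hb11, hb12, hb13, hb20, hb21, hb22, hb23, hb30, hb31, hb32, hb33]
        ring
      have o1 : ⟪ψ 1, wedge ![z 1 • b 1 + z 2 • b 2, z 0 • b 2 + z 1 • b 3]⟫_ℂ = 0 := by
        rw [hψ1', inner_wedge_pair, hae, hb2e]
        simp only [inner_add_left, inner_add_right, inner_sub_left, inner_sub_right, inner_smul_left, inner_smul_right, Complex.conj_ofReal, hb00, hb01, hb02, hb03, hb10, hb11, hb12, hb13, hb20, hb21, hb22, hb23, hb30, hb31, hb32, hb33]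
        ring
      have o2 : ⟪ψ 2, wedge ![z 1 • b 1 + z 2 • b 2, z 0 • b 2 + z 1 • b 3]⟫_ℂ = 0 := by
        rw [hψ2, inner_wedge_pair]
        have hcg : ⟪c2, z 1 • b 1 + z 2 • b 2⟫_ℂ = z 1 * conj ⟪b 1, c2⟫_ℂ + z 2 * conj ⟪b 2, c2⟫_ℂ := by
          rw [inner_add_right, inner_smul_right, inner_smul_right, ← inner_conj_symm c2 (b 1), ← inner_conj_symm c2 (b 2)]
        have hdg : ⟪d2, z 1 • b 1 + z 2 • b 2⟫_ℂ = z 1 * conj ⟪b 1, d2⟫_ℂ + z 2 * conj ⟪b 2, d2⟫_ℂ := by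
          rw [inner_add_right, inner_smul_right, inner_smul_right, ← inner_conj_symm d2 (b 1), ← inner_conj_symm d2 (b 2)]
        have hch : ⟪c2, z 0 • b 2 + z 1 • b 3⟫_ℂ = z 0 * conj ⟪b 2, c2⟫_ℂ + z 1 * conj ⟪b 3, c2⟫_ℂ := by
          rw [inner_add_right, inner_smul_right, inner_smul_right, ← inner_conj_symm c2 (b 2), ← inner_conj_symm c2 (b 3)]
        have hdh : ⟪d2, z 0 • b 2 + z 1 • b 3⟫_ℂ = z 0 * conj ⟪b 2, d2⟫_ℂ + z 1 * conj ⟪b 3, d2⟫_ℂ := by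
          rw [inner_add_right, inner_smul_right, inner_smul_right, ← inner_conj_symm d2 (b 2), ← inner_conj_symm d2 (b 3)]
        rw [hcg, hdg, hch, hdh]
        linear_combination (2:ℂ) * z 1 * f2
      have o3 : ⟪ψ 3, wedge ![z 1 • b 1 + z 2 • b 2, z 0 • b 2 + z 1 • b 3]⟫_ℂ = 0 := by
        rw [hψ3, inner_wedge_pair]
        have hcg : ⟪c3, z 1 • b 1 + z 2 • b 2⟫_ℂ = z 1 * conj ⟪b 1, c3⟫_ℂ + z 2 * conj ⟪b 2, c3⟫_ℂ := by
          rw [inner_add_right, inner_smul_right, inner_smul_right, ← inner_conj_symm c3 (b 1), ← inner_conj_symm c3 (b 2)]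
        have hdg : ⟪d3, z 1 • b 1 + z 2 • b 2⟫_ℂ = z 1 * conj ⟪b 1, d3⟫_ℂ + z 2 * conj ⟪b 2, d3⟫_ℂ := by
          rw [inner_add_right, inner_smul_right, inner_smul_right, ← inner_conj_symm d3 (b 1), ← inner_conj_symm d3 (b 2)]
        have hch : ⟪c3, z 0 • b 2 + z 1 • b 3⟫_ℂ = z 0 * conj ⟪b 2, c3⟫_ℂ + z 1 * conj ⟪b 3, c3⟫_ℂ := by
          rw [inner_add_right, inner_smul_right, inner_smul_right, ← inner_conj_symm c3 (b 2), ← inner_conj_symm c3 (b 3)]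
        have hdh : ⟪d3, z 0 • b 2 + z 1 • b 3⟫_ℂ = z 0 * conj ⟪b 2, d3⟫_ℂ + z 1 * conj ⟪b 3, d3⟫_ℂ := by
          rw [inner_add_right, inner_smul_right, inner_smul_right, ← inner_conj_symm d3 (b 2), ← inner_conj_symm d3 (b 3)]
        rw [hcg, hdg, hch, hdh]
        linear_combination (2:ℂ) * z 1 * f3
      have o4 : ⟪ψ 4, wedge ![z 1 • b 1 + z 2 • b 2, z 0 • b 2 + z 1 • b 3]⟫_ℂ = 0 := by
        rw [hψ4, inner_wedge_pair]
        have hcg : ⟪c4, z 1 • b 1 + z 2 • b 2⟫_ℂ = z 1 * conj ⟪b 1, c4⟫_ℂ + z 2 * conj ⟪b 2, c4⟫_ℂ := by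
          rw [inner_add_right, inner_smul_right, inner_smul_right, ← inner_conj_symm c4 (b 1), ← inner_conj_symm c4 (b 2)]
        have hdg : ⟪d4, z 1 • b 1 + z 2 • b 2⟫_ℂ = z 1 * conj ⟪b 1, d4⟫_ℂ + z 2 * conj ⟪b 2, d4⟫_ℂ := by
          rw [inner_add_right, inner_smul_right, inner_smul_right, ← inner_conj_symm d4 (b 1), ← inner_conj_symm d4 (b 2)]
        have hch : ⟪c4, z 0 • b 2 + z 1 • b 3⟫_ℂ = z 0 * conj ⟪b 2, c4⟫_ℂ + z 1 * conj ⟪b 3, c4⟫_ℂ := by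
          rw [inner_add_right, inner_smul_right, inner_smul_right, ← inner_conj_symm c4 (b 2), ← inner_conj_symm c4 (b 3)]
        have hdh : ⟪d4, z 0 • b 2 + z 1 • b 3⟫_ℂ = z 0 * conj ⟪b 2, d4⟫_ℂ + z 1 * conj ⟪b 3, d4⟫_ℂ := by
          rw [inner_add_right, inner_smul_right, inner_smul_right, ← inner_conj_symm d4 (b 2), ← inner_conj_symm d4 (b 3)]
        rw [hcg, hdg, hch, hdh]
        linear_combination (2:ℂ) * z 1 * f4
      refine ⟨z 1 • b 1 + z 2 • b 2, z 0 • b 2 + z 1 • b 3, ?_, fun i => ?_⟩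
      · apply wedge_ne_zero_of_inner
        have hgg : ⟪z 1 • b 1 + z 2 • b 2, z 1 • b 1 + z 2 • b 2⟫_ℂ = conj (z 1) * z 1 + conj (z 2) * z 2 := by
          simp only [inner_add_left, inner_add_right, inner_sub_left, inner_sub_right, inner_smul_left, inner_smul_right, hb00, hb01, hb02, hb03, hb10, hb11, hb12, hb13, hb20, hb21, hb22, hb23, hb30, hb31, hb32, hb33]
          ring
        have hhh : ⟪z 0 • b 2 + z 1 • b 3, z 0 • b 2 + z 1 • b 3⟫_ℂ = conj (z 0) * z 0 + conj (z 1) * z 1 := by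
          simp only [inner_add_left, inner_add_right, inner_sub_left, inner_sub_right, inner_smul_left, inner_smul_right, hb00, hb01, hb02, hb03, hb10, hb11, hb12, hb13, hb20, hb21, hb22, hb23, hb30, hb31, hb32, hb33]
          ring
        have hgh : ⟪z 1 • b 1 + z 2 • b 2, z 0 • b 2 + z 1 • b 3⟫_ℂ = conj (z 2) * z 0 := by
          simp only [inner_add_left, inner_add_right, inner_sub_left, inner_sub_right, inner_smul_left, inner_smul_right, hb00, hb01, hb02, hb03, hb10, hb11, hb12, hb13, hb20, hb21, hb22, hb23, hb30, hb31, hb32, hb33]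
          ring
        have hhg : ⟪z 0 • b 2 + z 1 • b 3, z 1 • b 1 + z 2 • b 2⟫_ℂ = conj (z 0) * z 2 := by
          simp only [inner_add_left, inner_add_right, inner_sub_left, inner_sub_right, inner_smul_left, inner_smul_right, hb00, hb01, hb02, hb03, hb10, hb11, hb12, hb13, hb20, hb21, hb22, hb23, hb30, hb31, hb32, hb33]
          ring
        rw [hgg, hhh, hgh, hhg]
        have hre : (conj (z 1) * z 1 + conj (z 2) * z 2) * (conj (z 0) * z 0 + conj (z 1) * z 1) - (conj (z 2) * z 0) * (conj (z 0) * z 2)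
            = conj (z 1) * z 1 * (conj (z 0) * z 0 + conj (z 1) * z 1 + conj (z 2) * z 2) := by ring
        rw [hre]
        refine factor_ne _ _ _ _ hz' ?_
        rintro ⟨hu0, hu1, hu2⟩
        exact hkne (by funext i; fin_cases i; exacts [hu0, hu1, hu2])
      · fin_cases i
        exacts [o0, o1, o2, o3, o4]
    · have o0 : ⟪ψ 0, wedge ![z 1 • b 1 + z 2 • b 2, z 0 • b 1 - z 2 • b 3]⟫_ℂ = 0 := by
        rw [hψ0', inner_wedge_pair, hae, hb1e]
        simp only [inner_add_left, inner_add_right, inner_sub_left, inner_sub_right, inner_smul_left, inner_smul_right, Complex.conj_ofReal, hb00, hb01, hb02, hb03, hb10, hb11, hb12, hb13, hb20, hb21, hb22, hb23, hb30, hb31, hb32, hb33]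
        ring
      have o1 : ⟪ψ 1, wedge ![z 1 • b 1 + z 2 • b 2, z 0 • b 1 - z 2 • b 3]⟫_ℂ = 0 := by
        rw [hψ1', inner_wedge_pair, hae, hb2e]
        simp only [inner_add_left, inner_add_right, inner_sub_left, inner_sub_right, inner_smul_left, inner_smul_right, Complex.conj_ofReal, hb00, hb01, hb02, hb03, hb10, hb11, hb12, hb13, hb20, hb21, hb22, hb23, hb30, hb31, hb32, hb33]
        ring
      have o2 : ⟪ψ 2, wedge ![z 1 • b 1 + z 2 • b 2, z 0 • b 1 - z 2 • b 3]⟫_ℂ = 0 := by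
        rw [hψ2, inner_wedge_pair]
        have hcg : ⟪c2, z 1 • b 1 + z 2 • b 2⟫_ℂ = z 1 * conj ⟪b 1, c2⟫_ℂ + z 2 * conj ⟪b 2, c2⟫_ℂ := by
          rw [inner_add_right, inner_smul_right, inner_smul_right, ← inner_conj_symm c2 (b 1), ← inner_conj_symm c2 (b 2)]
        have hdg : ⟪d2, z 1 • b 1 + z 2 • b 2⟫_ℂ = z 1 * conj ⟪b 1, d2⟫_ℂ + z 2 * conj ⟪b 2, d2⟫_ℂ := by
          rw [inner_add_right, inner_smul_right, inner_smul_right, ← inner_conj_symm d2 (b 1), ← inner_conj_symm d2 (b 2)]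
        have hch : ⟪c2, z 0 • b 1 - z 2 • b 3⟫_ℂ = z 0 * conj ⟪b 1, c2⟫_ℂ - z 2 * conj ⟪b 3, c2⟫_ℂ := by
          rw [inner_sub_right, inner_smul_right, inner_smul_right, ← inner_conj_symm c2 (b 1), ← inner_conj_symm c2 (b 3)]
        have hdh : ⟪d2, z 0 • b 1 - z 2 • b 3⟫_ℂ = z 0 * conj ⟪b 1, d2⟫_ℂ - z 2 * conj ⟪b 3, d2⟫_ℂ := by
          rw [inner_sub_right, inner_smul_right, inner_smul_right, ← inner_conj_symm d2 (b 1), ← inner_conj_symm d2 (b 3)]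
        rw [hcg, hdg, hch, hdh]
        linear_combination (-2:ℂ) * z 2 * f2
      have o3 : ⟪ψ 3, wedge ![z 1 • b 1 + z 2 • b 2, z 0 • b 1 - z 2 • b 3]⟫_ℂ = 0 := by
        rw [hψ3, inner_wedge_pair]
        have hcg : ⟪c3, z 1 • b 1 + z 2 • b 2⟫_ℂ = z 1 * conj ⟪b 1, c3⟫_ℂ + z 2 * conj ⟪b 2, c3⟫_ℂ := by
          rw [inner_add_right, inner_smul_right, inner_smul_right, ← inner_conj_symm c3 (b 1), ← inner_conj_symm c3 (b 2)]
        have hdg : ⟪d3, z 1 • b 1 + z 2 • b 2⟫_ℂ = z 1 * conj ⟪b 1, d3⟫_ℂ + z 2 * conj ⟪b 2, d3⟫_ℂ := by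
          rw [inner_add_right, inner_smul_right, inner_smul_right, ← inner_conj_symm d3 (b 1), ← inner_conj_symm d3 (b 2)]
        have hch : ⟪c3, z 0 • b 1 - z 2 • b 3⟫_ℂ = z 0 * conj ⟪b 1, c3⟫_ℂ - z 2 * conj ⟪b 3, c3⟫_ℂ := by
          rw [inner_sub_right, inner_smul_right, inner_smul_right, ← inner_conj_symm c3 (b 1), ← inner_conj_symm c3 (b 3)]
        have hdh : ⟪d3, z 0 • b 1 - z 2 • b 3⟫_ℂ = z 0 * conj ⟪b 1, d3⟫_ℂ - z 2 * conj ⟪b 3, d3⟫_ℂ := by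
          rw [inner_sub_right, inner_smul_right, inner_smul_right, ← inner_conj_symm d3 (b 1), ← inner_conj_symm d3 (b 3)]
        rw [hcg, hdg, hch, hdh]
        linear_combination (-2:ℂ) * z 2 * f3
      have o4 : ⟪ψ 4, wedge ![z 1 • b 1 + z 2 • b 2, z 0 • b 1 - z 2 • b 3]⟫_ℂ = 0 := by
        rw [hψ4, inner_wedge_pair]
        have hcg : ⟪c4, z 1 • b 1 + z 2 • b 2⟫_ℂ = z 1 * conj ⟪b 1, c4⟫_ℂ + z 2 * conj ⟪b 2, c4⟫_ℂ := by
          rw [inner_add_right, inner_smul_right, inner_smul_right, ← inner_conj_symm c4 (b 1), ← inner_conj_symm c4 (b 2)]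
        have hdg : ⟪d4, z 1 • b 1 + z 2 • b 2⟫_ℂ = z 1 * conj ⟪b 1, d4⟫_ℂ + z 2 * conj ⟪b 2, d4⟫_ℂ := by
          rw [inner_add_right, inner_smul_right, inner_smul_right, ← inner_conj_symm d4 (b 1), ← inner_conj_symm d4 (b 2)]
        have hch : ⟪c4, z 0 • b 1 - z 2 • b 3⟫_ℂ = z 0 * conj ⟪b 1, c4⟫_ℂ - z 2 * conj ⟪b 3, c4⟫_ℂ := by
          rw [inner_sub_right, inner_smul_right, inner_smul_right, ← inner_conj_symm c4 (b 1), ← inner_conj_symm c4 (b 3)]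
        have hdh : ⟪d4, z 0 • b 1 - z 2 • b 3⟫_ℂ = z 0 * conj ⟪b 1, d4⟫_ℂ - z 2 * conj ⟪b 3, d4⟫_ℂ := by
          rw [inner_sub_right, inner_smul_right, inner_smul_right, ← inner_conj_symm d4 (b 1), ← inner_conj_symm d4 (b 3)]
        rw [hcg, hdg, hch, hdh]
        linear_combination (-2:ℂ) * z 2 * f4
      refine ⟨z 1 • b 1 + z 2 • b 2, z 0 • b 1 - z 2 • b 3, ?_, fun i => ?_⟩
      · apply wedge_ne_zero_of_inner
        have hgg : ⟪z 1 • b 1 + z 2 • b 2, z 1 • b 1 + z 2 • b 2⟫_ℂ = conj (z 1) * z 1 + conj (z 2) * z 2 := by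
          simp only [inner_add_left, inner_add_right, inner_sub_left, inner_sub_right, inner_smul_left, inner_smul_right, hb00, hb01, hb02, hb03, hb10, hb11, hb12, hb13, hb20, hb21, hb22, hb23, hb30, hb31, hb32, hb33]
          ring
        have hhh : ⟪z 0 • b 1 - z 2 • b 3, z 0 • b 1 - z 2 • b 3⟫_ℂ = conj (z 0) * z 0 + conj (z 2) * z 2 := by
          simp only [inner_add_left, inner_add_right, inner_sub_left, inner_sub_right, inner_smul_left, inner_smul_right, hb00, hb01, hb02, hb03, hb10, hb11, hb12, hb13, hb20, hb21, hb22, hb23, hb30, hb31, hb32, hb33]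
          ring
        have hgh : ⟪z 1 • b 1 + z 2 • b 2, z 0 • b 1 - z 2 • b 3⟫_ℂ = conj (z 1) * z 0 := by
          simp only [inner_add_left, inner_add_right, inner_sub_left, inner_sub_right, inner_smul_left, inner_smul_right, hb00, hb01, hb02, hb03, hb10, hb11, hb12, hb13, hb20, hb21, hb22, hb23, hb30, hb31, hb32, hb33]
          ring
        have hhg : ⟪z 0 • b 1 - z 2 • b 3, z 1 • b 1 + z 2 • b 2⟫_ℂ = conj (z 0) * z 1 := by
          simp only [inner_add_left, inner_add_right, inner_sub_left, inner_sub_right, inner_smul_left, inner_smul_right, hb00, hb01, hb02, hb03, hb10, hb11, hb12, hb13, hb20, hb21, hb22, hb23, hb30, hb31, hb32, hb33]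
          ring
        rw [hgg, hhh, hgh, hhg]
        have hre : (conj (z 1) * z 1 + conj (z 2) * z 2) * (conj (z 0) * z 0 + conj (z 2) * z 2) - (conj (z 1) * z 0) * (conj (z 0) * z 1)
            = conj (z 2) * z 2 * (conj (z 0) * z 0 + conj (z 1) * z 1 + conj (z 2) * z 2) := by ring
        rw [hre]
        refine factor_ne _ _ _ _ hz' ?_
        rintro ⟨hu0, hu1, hu2⟩
        exact hkne (by funext i; fin_cases i; exacts [hu0, hu1, hu2])
      · fin_cases i
        exacts [o0, o1, o2, o3, o4]
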